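/- arXiv:1712.04228 — 2 statements merged into one kernel-verified Lean document; each statement's English description precedes it below -/
import Mathlib

section
/- A connected claw-free finite simple graph G has a unique perfect matching if and only if G belongs to the class 𝒢. -/
/-- A graph is claw-free if it has no induced subgraph isomorphic to `K_{1,3}`. -/
def ClawFree {V : Type*} (G : SimpleGraph V) : Prop :=
  ¬ ∃ a b c d : V, a ≠ b ∧ a ≠ c ∧ a ≠ d ∧ b ≠ c ∧ b ≠ d ∧ c ≠ d ∧
    G.Adj a b ∧ G.Adj a c ∧ G.Adj a d ∧ ¬ G.Adj b c ∧ ¬ G.Adj b d ∧ ¬ G.Adj c d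

/-- Operation 1: add two new vertices `x = inr 0` and `y = inr 1`, and the three
new edges `xy`, `xu`, `yu`. -/
def AddOp1 {V : Type*} (G : SimpleGraph V) (u : V) : SimpleGraph (V ⊕ Fin 2) :=
  SimpleGraph.fromRel fun a b =>
    match a, b with
    | Sum.inl a, Sum.inl b => G.Adj a b
    | Sum.inl a, Sum.inr _ => a = u
    | Sum.inr _, Sum.inr _ => True
    | _, _ => False

/-- Operation 2: add two new vertices `x = inr 0` and `y = inr 1`, the new edge `xy`,
and new edges between `x` and all vertices of `C`. -/
def AddOp2 {V : Type*} (G : SimpleGraph V) (C : Set V) : SimpleGraph (V ⊕ Fin 2) :=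
  SimpleGraph.fromRel fun a b =>
    match a, b with
    | Sum.inl a, Sum.inl b => G.Adj a b
    | Sum.inl a, Sum.inr i => i = 0 ∧ a ∈ C
    | Sum.inr _, Sum.inr _ => True
    | _, _ => False

/-- The class `𝒢`: obtained from `K₂` by iteratively applying Operation 1 (at a
simplicial vertex `u`) and Operation 2 (at a non-empty clique `C` such that
`N_G(u) \ C` is a clique for every `u ∈ C`), considered up to isomorphism. -/
inductive InClassG : ∀ (V : Type), SimpleGraph V → Prop
  | base : InClassG (Fin 2) ⊤
  | op1 {V : Type} (G : SimpleGraph V) (u : V)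
      (hu : G.IsClique (G.neighborSet u)) :
      InClassG V G → InClassG (V ⊕ Fin 2) (AddOp1 G u)
  | op2 {V : Type} (G : SimpleGraph V) (C : Set V) (hne : C.Nonempty)
      (hC : G.IsClique C) (hnbr : ∀ u ∈ C, G.IsClique (G.neighborSet u \ C)) :
      InClassG V G → InClassG (V ⊕ Fin 2) (AddOp2 G C)
  | iso {V W : Type} (G : SimpleGraph V) (H : SimpleGraph W) (e : G ≃g H) :
      InClassG V G → InClassG W H

open SimpleGraph

namespace UPM
variable {V : Type} {G : SimpleGraph V} {M : G.Subgraph}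

lemma partner_unique (hM : M.IsPerfectMatching) {v w w' : V}
    (h1 : M.Adj v w) (h2 : M.Adj v w') : w = w' := by
  obtain ⟨x, _, hy⟩ := (Subgraph.isPerfectMatching_iff.mp hM) v
  rw [hy w h1, hy w' h2]

lemma flip_false (hM : M.IsPerfectMatching)
    (hU : ∀ N : G.Subgraph, N.IsPerfectMatching → N = M)
    (m : ℕ) (c : ℕ → V) (hm0 : 0 < m) (hme : m % 2 = 0)
    (hinj : ∀ i < m, ∀ j < m, c i = c j → i = j)
    (hcl : c m = c 0)
    (hadj : ∀ i < m, G.Adj (c i) (c (i+1)))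
    (halt : ∀ i < m, (M.Adj (c i) (c (i+1)) ↔ i % 2 = 0)) : False := by
  classical
  have hMadj : ∀ i < m, i % 2 = 0 → M.Adj (c i) (c (i+1)) := fun i hi he => (halt i hi).2 he
  have hMnadj : ∀ i < m, i % 2 = 1 → ¬ M.Adj (c i) (c (i+1)) := by
    intro i hi ho hadj'
    have := (halt i hi).1 hadj'
    omega
  have hpartner : ∀ v u, M.Adj v u → (∃ i, i < m ∧ u = c i) → (∃ j, j < m ∧ v = c j) := by
    rintro v u hvu ⟨i, him, rfl⟩
    rcases Nat.even_or_odd i with hie | hio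
    · have h1 : M.Adj (c i) (c (i+1)) := hMadj i him (Nat.even_iff.mp hie)
      have h2 := partner_unique hM h1 hvu.symm
      rcases eq_or_lt_of_le (Nat.succ_le_of_lt him) with h | h
      · exact ⟨0, hm0, by rw [← h2, show i+1 = m from h, hcl]⟩
      · exact ⟨i+1, h, h2.symm⟩
    · have hio' := Nat.odd_iff.mp hio
      obtain ⟨i, rfl⟩ : ∃ k, i = k + 1 := ⟨i - 1, by omega⟩
      have h1 : M.Adj (c i) (c (i+1)) := hMadj i (by omega) (by omega)
      have h2 := partner_unique hM h1.symm hvu.symm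
      exact ⟨i, by omega, h2.symm⟩
  set R : V → Prop := fun x => ∃ i, i < m ∧ x = c i with hR
  have hRkeep : ∀ v u, ¬ R v → M.Adj v u → ¬ R u := by
    intro v u hv hvu hu
    exact hv (hpartner v u hvu hu)
  set N : G.Subgraph :=
    { verts := Set.univ
      Adj := fun x y => (M.Adj x y ∧ ¬ R x ∧ ¬ R y) ∨
        (∃ i, i < m ∧ i % 2 = 1 ∧ ((x = c i ∧ y = c (i+1)) ∨ (y = c i ∧ x = c (i+1))))
      adj_sub := by
        rintro v w (⟨h, -, -⟩ | ⟨i, him, -, (⟨rfl, rfl⟩ | ⟨rfl, rfl⟩)⟩)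
        · exact M.adj_sub h
        · exact hadj i him
        · exact (hadj i him).symm
      edge_vert := fun _ => Set.mem_univ _
      symm := Std.Symm.mk <| by
        rintro v w (⟨h, hv, hw⟩ | ⟨i, him, hio, h⟩)
        · exact Or.inl ⟨h.symm, hw, hv⟩
        · exact Or.inr ⟨i, him, hio, h.symm⟩ } with hN
  have hNadj12 : N.Adj (c 1) (c 2) := Or.inr ⟨1, by omega, rfl, Or.inl ⟨rfl, rfl⟩⟩
  have hNpm : N.IsPerfectMatching := by
    rw [Subgraph.isPerfectMatching_iff]
    intro v
    by_cases hv : R v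
    · obtain ⟨j, hjm, rfl⟩ := hv
      rcases Nat.even_or_odd j with hje | hjo
      · have hje' := Nat.even_iff.mp hje
        rcases Nat.eq_zero_or_pos j with rfl | hj0
        · refine ⟨c (m-1), Or.inr ⟨m-1, by omega, by omega,
            Or.inr ⟨rfl, by rw [show m - 1 + 1 = m by omega, hcl]⟩⟩, ?_⟩
          rintro y (⟨-, hx, -⟩ | ⟨i, him, hio, (⟨hx, rfl⟩ | ⟨rfl, hx⟩)⟩)
          · exact absurd ⟨0, hm0, rfl⟩ hx
          · have := hinj 0 hm0 i him hx; omega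
          · rcases eq_or_lt_of_le (Nat.succ_le_of_lt him) with h | h
            · rw [show i = m - 1 by omega]
            · have := hinj 0 hm0 (i+1) h hx; omega
        · refine ⟨c (j-1), Or.inr ⟨j-1, by omega, by omega,
            Or.inr ⟨rfl, by rw [show j - 1 + 1 = j by omega]⟩⟩, ?_⟩
          rintro y (⟨-, hx, -⟩ | ⟨i, him, hio, (⟨hx, rfl⟩ | ⟨rfl, hx⟩)⟩)
          · exact absurd ⟨j, hjm, rfl⟩ hx
          · have := hinj j hjm i him hx; omega
          · rcases eq_or_lt_of_le (Nat.succ_le_of_lt him) with h | h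
            · have := hinj j hjm 0 hm0 (by rw [hx, show i+1 = m from h]; exact hcl); omega
            · have := hinj j hjm (i+1) h hx
              rw [show i = j - 1 by omega]
      · have hjo' := Nat.odd_iff.mp hjo
        refine ⟨c (j+1), Or.inr ⟨j, hjm, hjo', Or.inl ⟨rfl, rfl⟩⟩, ?_⟩
        rintro y (⟨-, hx, -⟩ | ⟨i, him, hio, (⟨hx, rfl⟩ | ⟨rfl, hx⟩)⟩)
        · exact absurd ⟨j, hjm, rfl⟩ hx
        · rw [hinj j hjm i him hx]
        · rcases eq_or_lt_of_le (Nat.succ_le_of_lt him) with h | h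
          · have := hinj j hjm 0 hm0 (by rw [hx, show i+1 = m from h]; exact hcl); omega
          · have := hinj j hjm (i+1) h hx; omega
    · obtain ⟨w, hw, hwu⟩ := (Subgraph.isPerfectMatching_iff.mp hM) v
      have hwR : ¬ R w := hRkeep v w hv hw
      refine ⟨w, Or.inl ⟨hw, hv, hwR⟩, ?_⟩
      rintro y (⟨h, -, -⟩ | ⟨i, him, hio, (⟨hx, rfl⟩ | ⟨rfl, hx⟩)⟩)
      · exact hwu y h
      · exact absurd ⟨i, him, hx⟩ hv
      · exfalso
        apply hv
        rcases eq_or_lt_of_le (Nat.succ_le_of_lt him) with h | h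
        · exact ⟨0, hm0, by rw [hx, show i+1 = m from h]; exact hcl⟩
        · exact ⟨i+1, h, hx⟩
  have hNM := hU N hNpm
  rw [hNM] at hNadj12
  exact hMnadj 1 (by omega) rfl hNadj12

/-- An `M`-alternating path starting and ending with matching edges. -/
def AltPath (G : SimpleGraph V) (M : G.Subgraph) (l : ℕ) (p : ℕ → V) : Prop :=
  l % 2 = 1 ∧ (∀ i ≤ l, ∀ j ≤ l, p i = p j → i = j) ∧
  (∀ i < l, G.Adj (p i) (p (i+1))) ∧ (∀ i < l, (M.Adj (p i) (p (i+1)) ↔ i % 2 = 0))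

lemma ap_partner_in {l : ℕ} {p : ℕ → V} (hM : M.IsPerfectMatching)
    (hap : AltPath G M l p) {v u : V} (hvu : M.Adj v u)
    (hu : ∃ i, i ≤ l ∧ u = p i) : ∃ j, j ≤ l ∧ v = p j := by
  obtain ⟨hl, hinj, hadj, halt⟩ := hap
  obtain ⟨i, hil, rfl⟩ := hu
  rcases Nat.even_or_odd i with hie | hio
  · have hie' := Nat.even_iff.mp hie
    have h1 : M.Adj (p i) (p (i+1)) := (halt i (by omega)).2 hie'
    have h2 := partner_unique hM h1 hvu.symm
    exact ⟨i+1, by omega, h2.symm⟩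
  · have hio' := Nat.odd_iff.mp hio
    obtain ⟨i, rfl⟩ : ∃ k, i = k + 1 := ⟨i - 1, by omega⟩
    have h1 : M.Adj (p i) (p (i+1)) := (halt i (by omega)).2 (by omega)
    have h2 := partner_unique hM h1.symm hvu.symm
    exact ⟨i, by omega, h2.symm⟩

lemma step1 {l : ℕ} {p : ℕ → V} (hM : M.IsPerfectMatching)
    (hap : AltPath G M l p) (hmax : ¬ ∃ q, AltPath G M (l+2) q)
    {u : V} (hu : G.Adj (p 0) u) : ∃ i, i ≤ l ∧ u = p i := by
  by_contra hnot
  obtain ⟨hl, hinj, hadj, halt⟩ := hap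
  obtain ⟨w, hw, hwu⟩ := (Subgraph.isPerfectMatching_iff.mp hM) u
  have hwr : ¬ ∃ i, i ≤ l ∧ w = p i := by
    intro hr
    exact hnot (ap_partner_in hM ⟨hl, hinj, hadj, halt⟩ hw hr)
  have hne : u ≠ w := (M.adj_sub hw).ne
  apply hmax
  set q : ℕ → V := fun n => if n = 0 then w else if n = 1 then u else p (n-2) with hq
  have q0 : q 0 = w := rfl
  have q1 : q 1 = u := rfl
  have q2 : ∀ k, q (k+2) = p k := by
    intro k
    rw [hq]
    simp only
    rw [if_neg (by omega), if_neg (by omega)]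
    congr 1
  have qv : ∀ i ≤ l + 2, (i = 0 ∧ q i = w) ∨ (i = 1 ∧ q i = u) ∨
      (∃ t, t ≤ l ∧ i = t + 2 ∧ q i = p t) := by
    intro i hi
    rcases i with _ | i
    · exact Or.inl ⟨rfl, rfl⟩
    · rcases i with _ | i
      · exact Or.inr (Or.inl ⟨rfl, rfl⟩)
      · exact Or.inr (Or.inr ⟨i, by omega, rfl, q2 i⟩)
  refine ⟨q, by omega, ?_, ?_, ?_⟩
  · intro i hi j hj h
    rcases qv i hi with ⟨rfl, e1⟩ | ⟨rfl, e1⟩ | ⟨s, hs, rfl, e1⟩ <;>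
      rcases qv j hj with ⟨rfl, e2⟩ | ⟨rfl, e2⟩ | ⟨t, ht, rfl, e2⟩ <;>
      have h' := e1.symm.trans (h.trans e2)
    · rfl
    · exact absurd h'.symm hne
    · exact absurd ⟨t, ht, h'⟩ hwr
    · exact absurd h' hne
    · rfl
    · exact absurd ⟨t, ht, h'⟩ hnot
    · exact absurd ⟨s, hs, h'.symm⟩ hwr
    · exact absurd ⟨s, hs, h'.symm⟩ hnot
    · have := hinj s hs t ht h'
      omega
  · intro i hi
    rcases i with _ | i
    · rw [q0, q1]
      exact (M.adj_sub hw).symm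
    · rcases i with _ | i
      · rw [q1, show (1:ℕ)+1 = 0+2 from rfl, q2]
        exact hu.symm
      · rw [show i+1+1 = i+2 from rfl, q2, show i+2+1 = (i+1)+2 from rfl, q2]
        exact hadj i (by omega)
  · intro i hi
    rcases i with _ | i
    · rw [q0, q1]
      simpa using hw.symm
    · rcases i with _ | i
      · rw [q1, show (1:ℕ)+1 = 0+2 from rfl, q2]
        simp only [show (1:ℕ) % 2 = 1 from rfl]
        constructor
        · intro hx
          have h2 := partner_unique hM hw hx
          exact absurd ⟨0, by omega, h2⟩ hwr
        · omega
      · rw [show i+1+1 = i+2 from rfl, q2, show i+2+1 = (i+1)+2 from rfl, q2]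
        have := halt i (by omega)
        rw [show (i+1+1) % 2 = i % 2 by omega]
        exact this

lemma step2 {l : ℕ} {p : ℕ → V} (hM : M.IsPerfectMatching)
    (hU : ∀ N : G.Subgraph, N.IsPerfectMatching → N = M)
    (hap : AltPath G M l p) {j : ℕ} (hjl : j ≤ l) (hjo : j % 2 = 1)
    (h0 : G.Adj (p 0) (p j)) : j = 1 := by
  obtain ⟨hl, hinj, hadj, halt⟩ := hap
  by_contra hne
  have hj3 : 3 ≤ j := by
    rcases Nat.lt_or_ge j 3 with h | h
    · interval_cases j <;> simp_all
    · exact h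
  set c : ℕ → V := fun i => if i ≤ j then p i else p 0 with hc
  have cv : ∀ i ≤ j, c i = p i := fun i hi => if_pos hi
  have cvj : c (j+1) = p 0 := if_neg (by omega)
  apply flip_false hM hU (j+1) c (by omega) (by omega)
  · intro a ha b hb h
    rw [cv a (by omega), cv b (by omega)] at h
    exact hinj a (by omega) b (by omega) h
  · rw [cvj, cv 0 (by omega)]
  · intro i hi
    rcases Nat.lt_or_ge i j with h | h
    · rw [cv i (by omega), cv (i+1) (by omega)]
      exact hadj i (by omega)
    · have : i = j := by omega
      subst this
      rw [cv i le_rfl, cvj]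
      exact h0.symm
  · intro i hi
    rcases Nat.lt_or_ge i j with h | h
    · rw [cv i (by omega), cv (i+1) (by omega)]
      exact halt i (by omega)
    · have : i = j := by omega
      subst this
      rw [cv i le_rfl, cvj]
      constructor
      · intro hx
        have h1 : M.Adj (p (i-1)) (p i) := by
          have := (halt (i-1) (by omega)).2 (by omega)
          rwa [show i - 1 + 1 = i by omega] at this
        have := partner_unique hM h1.symm hx
        have := hinj (i-1) (by omega) 0 (by omega) this
        omega
      · omega

lemma step3 {l : ℕ} {p : ℕ → V} (hM : M.IsPerfectMatching)
    (hU : ∀ N : G.Subgraph, N.IsPerfectMatching → N = M) (hcf : ClawFree G)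
    (hap : AltPath G M l p) {j : ℕ} (hjl : j ≤ l) (hje : j % 2 = 0) (hj2 : 2 ≤ j)
    (h0 : G.Adj (p 0) (p j)) : j = 2 := by
  by_contra hne
  obtain ⟨k, rfl⟩ : ∃ k, j = k + 2 := ⟨j - 2, by omega⟩
  have hk2 : 2 ≤ k := by omega
  have hke : k % 2 = 0 := by omega
  obtain ⟨hl, hinj, hadj, halt⟩ := hap
  have hkl : k + 3 ≤ l := by omega
  have hedge : G.Adj (p (k+1)) (p (k+3)) := by
    by_contra hne2
    apply hcf
    refine ⟨p (k+2), p 0, p (k+1), p (k+3), ?_, ?_, ?_, ?_, ?_, ?_,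
      h0.symm, (hadj (k+1) (by omega)).symm, hadj (k+2) (by omega), ?_, ?_, hne2⟩
    · intro h; have := hinj (k+2) (by omega) 0 (by omega) h; omega
    · intro h; have := hinj (k+2) (by omega) (k+1) (by omega) h; omega
    · intro h; have := hinj (k+2) (by omega) (k+3) (by omega) h; omega
    · intro h; have := hinj 0 (by omega) (k+1) (by omega) h; omega
    · intro h; have := hinj 0 (by omega) (k+3) (by omega) h; omega
    · intro h; have := hinj (k+1) (by omega) (k+3) (by omega) h; omega
    · intro h
      have := step2 hM hU ⟨hl, hinj, hadj, halt⟩ (by omega : k+1 ≤ l) (by omega) h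
      omega
    · intro h
      have := step2 hM hU ⟨hl, hinj, hadj, halt⟩ (by omega : k+3 ≤ l) (by omega) h
      omega
  set c : ℕ → V := fun i => if i ≤ k+1 then p i else if i = k+2 then p (k+3)
    else if i = k+3 then p (k+2) else p 0 with hc
  have cv : ∀ i ≤ k+1, c i = p i := fun i hi => if_pos hi
  have cv2 : c (k+2) = p (k+3) := by
    rw [hc]
    simp only
    rw [if_neg (by omega : ¬ k+2 ≤ k+1)]
    simp
  have cv3 : c (k+3) = p (k+2) := by
    rw [hc]
    simp only
    rw [if_neg (by omega : ¬ k+3 ≤ k+1), if_neg (by omega : ¬ k+3 = k+2)]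
    simp
  have cv4 : c (k+4) = p 0 := by
    rw [hc]
    simp only
    rw [if_neg (by omega : ¬ k+4 ≤ k+1), if_neg (by omega : ¬ k+4 = k+2),
      if_neg (by omega : ¬ k+4 = k+3)]
  -- translate indices
  have cvt : ∀ i < k+4, ∃ t, t ≤ l ∧ c i = p t ∧
      ((i ≤ k+1 ∧ t = i) ∨ (i = k+2 ∧ t = k+3) ∨ (i = k+3 ∧ t = k+2)) := by
    intro i hi
    rcases Nat.lt_or_ge i (k+2) with h | h
    · exact ⟨i, by omega, cv i (by omega), Or.inl ⟨by omega, rfl⟩⟩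
    · rcases Nat.eq_or_lt_of_le h with h' | h'
      · exact ⟨k+3, by omega, h' ▸ cv2, Or.inr (Or.inl ⟨h'.symm, rfl⟩)⟩
      · have : i = k + 3 := by omega
        subst this
        exact ⟨k+2, by omega, cv3, Or.inr (Or.inr ⟨rfl, rfl⟩)⟩
  apply flip_false hM hU (k+4) c (by omega) (by omega)
  · intro a ha b hb h
    obtain ⟨s, hsl, hcs, hs⟩ := cvt a ha
    obtain ⟨t, htl, hct, ht⟩ := cvt b hb
    rw [hcs, hct] at h
    have := hinj s hsl t htl h
    omega
  · rw [cv4, cv 0 (by omega)]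
  · intro i hi
    rcases Nat.lt_or_ge i (k+1) with h | h
    · rw [cv i (by omega), cv (i+1) (by omega)]
      exact hadj i (by omega)
    · rcases Nat.eq_or_lt_of_le h with h' | h'
      · rw [← h', cv (k+1) le_rfl, show k+1+1 = k+2 from rfl, cv2]
        exact hedge
      · rcases Nat.lt_or_ge i (k+3) with h'' | h''
        · rw [show i = k+2 by omega, cv2, show k+2+1 = k+3 from rfl, cv3]
          exact (hadj (k+2) (by omega)).symm
        · rw [show i = k+3 by omega, cv3, show k+3+1 = k+4 from rfl, cv4]
          exact h0.symm
  · intro i hi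
    rcases Nat.lt_or_ge i (k+1) with h | h
    · rw [cv i (by omega), cv (i+1) (by omega)]
      exact halt i (by omega)
    · rcases Nat.eq_or_lt_of_le h with h' | h'
      · rw [← h', cv (k+1) le_rfl, show k+1+1 = k+2 from rfl, cv2]
        rw [show (k+1) % 2 = 1 by omega]
        constructor
        · intro hx
          have h1 : M.Adj (p k) (p (k+1)) := (halt k (by omega)).2 hke
          have := partner_unique hM h1.symm hx
          have := hinj k (by omega) (k+3) (by omega) this
          omega
        · omega
      · rcases Nat.lt_or_ge i (k+3) with h'' | h''
        · rw [show i = k+2 by omega, cv2, show k+2+1 = k+3 from rfl, cv3,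
            show (k+2) % 2 = 0 by omega]
          have := (halt (k+2) (by omega)).2 (by omega)
          simpa using this.symm
        · rw [show i = k+3 by omega, cv3, show k+3+1 = k+4 from rfl, cv4,
            show (k+3) % 2 = 1 by omega]
          constructor
          · intro hx
            have h1 : M.Adj (p (k+2)) (p (k+3)) := (halt (k+2) (by omega)).2 (by omega)
            have := partner_unique hM h1 hx
            have := hinj (k+3) (by omega) 0 (by omega) this
            omega
          · omega
lemma structure_lemma [Fintype V] [Nonempty V] (hcf : ClawFree G) (hM : M.IsPerfectMatching)
    (hU : ∀ N : G.Subgraph, N.IsPerfectMatching → N = M) :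
    ∃ a b : V, M.Adj a b ∧ (G.neighborSet b = {a} ∨
      ∃ u : V, G.neighborSet a = {b, u} ∧ G.neighborSet b = {a, u}) := by
  classical
  obtain ⟨v0⟩ := ‹Nonempty V›
  obtain ⟨w0, hw0, -⟩ := (Subgraph.isPerfectMatching_iff.mp hM) v0
  have hne0 : v0 ≠ w0 := (M.adj_sub hw0).ne
  set P : ℕ → Prop := fun l => ∃ p, AltPath G M l p with hP
  haveI : DecidablePred P := Classical.decPred P
  have hP1 : P 1 := by
    refine ⟨fun i => if i = 0 then v0 else w0, rfl, ?_, ?_, ?_⟩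
    · intro i hi j hj h
      interval_cases i <;> interval_cases j <;> simp_all
    · intro i hi
      interval_cases i
      simpa using M.adj_sub hw0
    · intro i hi
      interval_cases i
      simpa using hw0
  have hPbound : ∀ l, P l → l < Fintype.card V := by
    rintro l ⟨p, hl, hinj, -, -⟩
    have h1 : (Finset.range (l+1)).card ≤ (Finset.univ : Finset V).card := by
      apply Finset.card_le_card_of_injOn (fun i => p i) (fun a _ => Finset.mem_univ _)
      intro a ha b hb h
      exact hinj a (by simpa [Nat.lt_succ_iff] using ha) b (by simpa [Nat.lt_succ_iff] using hb) h
    simpa using h1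
  set L := Nat.findGreatest P (Fintype.card V) with hLdef
  have hPL : P L := Nat.findGreatest_spec (le_of_lt (hPbound 1 hP1)) hP1
  have hmax : ¬ ∃ q, AltPath G M (L+2) q := by
    intro hq
    have h2 : L + 2 < Fintype.card V := hPbound _ hq
    exact Nat.findGreatest_is_greatest (P := P) (n := Fintype.card V) (k := L+2) (by omega) (by omega) hq
  obtain ⟨p, hap⟩ := hPL
  obtain ⟨hl, hinj, hadj, halt⟩ := hap
  have hap' : AltPath G M L p := ⟨hl, hinj, hadj, halt⟩
  have hM01 : M.Adj (p 0) (p 1) := (halt 0 (by omega)).2 rfl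
  by_cases hA : 2 ≤ L ∧ G.Adj (p 0) (p 2)
  · obtain ⟨hL2, hadj02⟩ := hA
    set q : ℕ → V := fun n => if n = 0 then p 1 else if n = 1 then p 0 else p n with hq
    have qv0 : q 0 = p 1 := rfl
    have qv1 : q 1 = p 0 := by rw [hq]; norm_num
    have qv2 : ∀ n, 2 ≤ n → q n = p n := by
      intro n hn
      rw [hq]
      simp only
      rw [if_neg (by omega), if_neg (by omega)]
    have qtv : ∀ i, i ≤ L → ∃ t, t ≤ L ∧ q i = p t ∧
        ((i = 0 ∧ t = 1) ∨ (i = 1 ∧ t = 0) ∨ (2 ≤ i ∧ t = i)) := by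
      intro i hi
      rcases i with _ | i
      · exact ⟨1, by omega, qv0, Or.inl ⟨rfl, rfl⟩⟩
      · rcases i with _ | i
        · exact ⟨0, by omega, qv1, Or.inr (Or.inl ⟨rfl, rfl⟩)⟩
        · exact ⟨i+2, hi, qv2 _ (by omega), Or.inr (Or.inr ⟨by omega, rfl⟩)⟩
    have hapq : AltPath G M L q := by
      refine ⟨hl, ?_, ?_, ?_⟩
      · intro i hi j hj h
        obtain ⟨s, hs, e1, h1⟩ := qtv i hi
        obtain ⟨t, ht, e2, h2⟩ := qtv j hj
        have h' := e1.symm.trans (h.trans e2)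
        have := hinj s hs t ht h'
        omega
      · intro i hi
        rcases i with _ | i
        · rw [qv0, qv1]
          exact (hadj 0 (by omega)).symm
        · rcases i with _ | i
          · rw [qv1, qv2 2 (by omega)]
            exact hadj02
          · rw [qv2 (i+2) (by omega), qv2 (i+3) (by omega)]
            exact hadj (i+2) hi
      · intro i hi
        rcases i with _ | i
        · rw [qv0, qv1]
          simpa using hM01.symm
        · rcases i with _ | i
          · rw [qv1, qv2 2 (by omega)]
            simp only [show (1:ℕ) % 2 = 1 from rfl]
            constructor
            · intro hx
              have h1 := partner_unique hM hM01 hx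
              have := hinj 1 (by omega) 2 (by omega) h1
              omega
            · omega
          · rw [qv2 (i+2) (by omega), qv2 (i+3) (by omega)]
            exact halt (i+2) hi
    have hNp0 : G.neighborSet (p 0) = {p 1, p 2} := by
      ext x
      simp only [mem_neighborSet, Set.mem_insert_iff, Set.mem_singleton_iff]
      constructor
      · intro hx
        obtain ⟨i, hil, rfl⟩ := step1 hM hap' hmax hx
        rcases Nat.even_or_odd i with hie | hio
        · have hie' := Nat.even_iff.mp hie
          rcases Nat.eq_zero_or_pos i with rfl | hi0
          · exact absurd hx (G.loopless.irrefl _)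
          · have := step3 hM hU hcf hap' hil hie' (by omega) hx
            right; rw [this]
        · have := step2 hM hU hap' hil (Nat.odd_iff.mp hio) hx
          left; rw [this]
      · rintro (rfl | rfl)
        · exact hadj 0 (by omega)
        · exact hadj02
    have hNp1 : G.neighborSet (p 1) = {p 0, p 2} := by
      ext x
      simp only [mem_neighborSet, Set.mem_insert_iff, Set.mem_singleton_iff]
      constructor
      · intro hx
        have hx' : G.Adj (q 0) x := by rwa [qv0]
        obtain ⟨i, hil, hxi⟩ := step1 hM hapq hmax hx'
        rw [hxi] at hx'
        rcases Nat.even_or_odd i with hie | hio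
        · have hie' := Nat.even_iff.mp hie
          rcases Nat.eq_zero_or_pos i with rfl | hi0
          · rw [hxi, qv0] at hx
            exact absurd hx (G.loopless.irrefl _)
          · have h3 := step3 hM hU hcf hapq hil hie' (by omega) hx'
            right; rw [hxi, h3, qv2 2 (by omega)]
        · have h2 := step2 hM hU hapq hil (Nat.odd_iff.mp hio) hx'
          left; rw [hxi, h2, qv1]
      · rintro (rfl | rfl)
        · exact (hadj 0 (by omega)).symm
        · exact hadj 1 (by omega)
    exact ⟨p 0, p 1, hM01, Or.inr ⟨p 2, hNp0, hNp1⟩⟩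
  · refine ⟨p 1, p 0, hM01.symm, Or.inl ?_⟩
    ext x
    simp only [mem_neighborSet, Set.mem_singleton_iff]
    constructor
    · intro hx
      obtain ⟨i, hil, rfl⟩ := step1 hM hap' hmax hx
      rcases Nat.even_or_odd i with hie | hio
      · have hie' := Nat.even_iff.mp hie
        rcases Nat.eq_zero_or_pos i with rfl | hi0
        · exact absurd hx (G.loopless.irrefl _)
        · have h3 := step3 hM hU hcf hap' hil hie' (by omega) hx
          subst h3
          exact absurd ⟨hil, hx⟩ hA
      · have := step2 hM hU hap' hil (Nat.odd_iff.mp hio) hx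
        rw [this]
    · rintro rfl
      exact hadj 0 (by omega)

lemma clawfree_induce (hcf : ClawFree G) (s : Set V) : ClawFree (G.induce s) := by
  rintro ⟨a, b, c, d, h1, h2, h3, h4, h5, h6, h7, h8, h9, h10, h11, h12⟩
  exact hcf ⟨a, b, c, d,
    fun h => h1 (Subtype.ext h), fun h => h2 (Subtype.ext h), fun h => h3 (Subtype.ext h),
    fun h => h4 (Subtype.ext h), fun h => h5 (Subtype.ext h), fun h => h6 (Subtype.ext h),
    h7, h8, h9, h10, h11, h12⟩

lemma walk_cross {S : Set V} : ∀ {x y : V}, G.Walk x y → x ∉ S → y ∈ S →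
    ∃ p q, p ∉ S ∧ q ∈ S ∧ G.Adj p q := by
  intro x y w
  induction w with
  | nil => intro h1 h2; exact absurd h2 h1
  | @cons u v w h w' ih =>
    intro h1 h2
    by_cases hv : v ∈ S
    · exact ⟨u, v, h1, hv, h⟩
    · exact ih hv h2

lemma walk_avoid {s : Set V}
    (hX : ∀ p q, p ∈ s → q ∈ s → p ≠ q →
      (∃ x, x ∉ s ∧ G.Adj p x) → (∃ x, x ∉ s ∧ G.Adj q x) → G.Adj p q) :
    ∀ n : ℕ,
      (∀ {x y : V} (w : G.Walk x y) (_ : w.length ≤ n) (hx : x ∈ s) (hy : y ∈ s),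
        (G.induce s).Reachable ⟨x, hx⟩ ⟨y, hy⟩) ∧
      (∀ {z y : V} (w : G.Walk z y) (_ : w.length ≤ n) (_ : z ∉ s) (hy : y ∈ s),
        ∃ q, ∃ hq : q ∈ s, (∃ x, x ∉ s ∧ G.Adj q x) ∧
          (G.induce s).Reachable ⟨q, hq⟩ ⟨y, hy⟩) := by
  intro n
  induction n using Nat.strong_induction_on with
  | _ n IH =>
  constructor
  · intro x y w hw hx hy
    cases w with
    | nil => exact Reachable.refl _
    | @cons _ v _ h w' =>
      have hn : 1 ≤ n := by
        simp only [Walk.length_cons] at hw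
        omega
      have hw' : w'.length ≤ n - 1 := by
        simp only [Walk.length_cons] at hw
        omega
      by_cases hv : v ∈ s
      · have hreach := (IH (n-1) (by omega)).1 w' hw' hv hy
        have hadj' : (G.induce s).Adj ⟨x, hx⟩ ⟨v, hv⟩ := h
        exact (hadj'.reachable).trans hreach
      · obtain ⟨q, hq, hqb, hreach⟩ := (IH (n-1) (by omega)).2 w' hw' hv hy
        by_cases hxq : x = q
        · have he : (⟨x, hx⟩ : ↥s) = ⟨q, hq⟩ := Subtype.ext hxq
          rwa [he]
        · have hadj : G.Adj x q := hX x q hx hq hxq ⟨v, hv, h⟩ hqb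
          have hadj' : (G.induce s).Adj ⟨x, hx⟩ ⟨q, hq⟩ := hadj
          exact (hadj'.reachable).trans hreach
  · intro z y w hw hz hy
    cases w with
    | nil => exact absurd hy hz
    | @cons _ v _ h w' =>
      have hn : 1 ≤ n := by
        simp only [Walk.length_cons] at hw
        omega
      have hw' : w'.length ≤ n - 1 := by
        simp only [Walk.length_cons] at hw
        omega
      by_cases hv : v ∈ s
      · exact ⟨v, hv, ⟨z, hz, h.symm⟩, (IH (n-1) (by omega)).1 w' hw' hv hy⟩
      · exact (IH (n-1) (by omega)).2 w' hw' hv hy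

lemma induced_upm {a b : V} (hM : M.IsPerfectMatching)
    (hU : ∀ N : G.Subgraph, N.IsPerfectMatching → N = M) (hab : M.Adj a b) :
    ∃! N' : (G.induce {v : V | v ≠ a ∧ v ≠ b}).Subgraph, N'.IsPerfectMatching := by
  classical
  set s : Set V := {v : V | v ≠ a ∧ v ≠ b} with hs
  have hnab : a ≠ b := (M.adj_sub hab).ne
  have hkeep : ∀ v w : V, v ∈ s → M.Adj v w → w ∈ s := by
    rintro v w ⟨hva, hvb⟩ hvw
    constructor
    · rintro rfl
      exact hvb (partner_unique hM hvw.symm hab)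
    · rintro rfl
      exact hva (partner_unique hM hvw.symm hab.symm)
  set M' : (G.induce s).Subgraph :=
    { verts := Set.univ
      Adj := fun x y => M.Adj ↑x ↑y
      adj_sub := fun h => M.adj_sub h
      edge_vert := fun _ => Set.mem_univ _
      symm := ⟨fun x y h => h.symm⟩ } with hM'
  have hM'pm : M'.IsPerfectMatching := by
    rw [Subgraph.isPerfectMatching_iff]
    rintro ⟨v, hv⟩
    obtain ⟨w, hw, hwu⟩ := (Subgraph.isPerfectMatching_iff.mp hM) v
    refine ⟨⟨w, hkeep v w hv hw⟩, hw, ?_⟩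
    rintro ⟨y, hy⟩ hyadj
    exact Subtype.ext (hwu y hyadj)
  refine ⟨M', hM'pm, ?_⟩
  intro N' hN'
  -- lift N' to a perfect matching of G
  set N : G.Subgraph :=
    { verts := Set.univ
      Adj := fun x y => (∃ (hx : x ∈ s) (hy : y ∈ s), N'.Adj ⟨x, hx⟩ ⟨y, hy⟩) ∨
        (x = a ∧ y = b) ∨ (x = b ∧ y = a)
      adj_sub := by
        rintro v w (⟨hv, hw, h⟩ | ⟨rfl, rfl⟩ | ⟨rfl, rfl⟩)
        · exact N'.adj_sub h
        · exact M.adj_sub hab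
        · exact (M.adj_sub hab).symm
      edge_vert := fun _ => Set.mem_univ _
      symm := Std.Symm.mk <| by
        rintro v w (⟨hv, hw, h⟩ | ⟨rfl, rfl⟩ | ⟨rfl, rfl⟩)
        · exact Or.inl ⟨hw, hv, h.symm⟩
        · exact Or.inr (Or.inr ⟨rfl, rfl⟩)
        · exact Or.inr (Or.inl ⟨rfl, rfl⟩) } with hN
  have hNpm : N.IsPerfectMatching := by
    rw [Subgraph.isPerfectMatching_iff]
    intro v
    by_cases hva : v = a
    · subst hva
      refine ⟨b, Or.inr (Or.inl ⟨rfl, rfl⟩), ?_⟩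
      rintro y (⟨hv, hy, h⟩ | ⟨-, rfl⟩ | ⟨h1, rfl⟩)
      · exact absurd rfl hv.1
      · rfl
      · exact absurd h1 hnab
    · by_cases hvb : v = b
      · subst hvb
        refine ⟨a, Or.inr (Or.inr ⟨rfl, rfl⟩), ?_⟩
        rintro y (⟨hv, hy, h⟩ | ⟨h1, rfl⟩ | ⟨-, rfl⟩)
        · exact absurd rfl hv.2
        · exact absurd h1 hnab.symm
        · rfl
      · obtain ⟨⟨w, hws⟩, hw, hwu⟩ :=
          (Subgraph.isPerfectMatching_iff.mp hN') ⟨v, ⟨hva, hvb⟩⟩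
        refine ⟨w, Or.inl ⟨⟨hva, hvb⟩, hws, hw⟩, ?_⟩
        rintro y (⟨hv, hy, h⟩ | ⟨h1, rfl⟩ | ⟨h1, rfl⟩)
        · have := hwu ⟨y, hy⟩ h
          exact congrArg Subtype.val this
        · exact absurd h1 hva
        · exact absurd h1 hvb
  have hNM := hU N hNpm
  apply Subgraph.ext
  · have h1 : N'.verts = Set.univ := Set.eq_univ_of_forall hN'.2
    rw [h1]
  · funext x y
    apply propext
    constructor
    · intro h
      have hNadj : N.Adj ↑x ↑y := Or.inl ⟨x.2, y.2, by
        convert h <;> exact Subtype.coe_eta _ _⟩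
      rw [hNM] at hNadj
      exact hNadj
    · intro h
      have hMadj : M.Adj ↑x ↑y := h
      rw [← hNM] at hMadj
      rcases hMadj with ⟨hx, hy, hadj⟩ | ⟨h1, -⟩ | ⟨h1, -⟩
      · convert hadj <;> exact (Subtype.coe_eta _ _).symm
      · exact absurd h1 x.2.1
      · exact absurd h1 x.2.2

def pairFun (a b : V) (x : ({v : V | v ≠ a ∧ v ≠ b} : Set V) ⊕ Fin 2) : V :=
  match x with
  | Sum.inl v => ↑v
  | Sum.inr i => if i = 0 then a else b

lemma pairFun_bij {a b : V} (hne : a ≠ b) : Function.Bijective (pairFun a b) := by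
  constructor
  · rintro (v | i) (w | j) h
    · simp only [pairFun] at h
      exact congrArg Sum.inl (Subtype.ext h)
    · exfalso
      simp only [pairFun] at h
      by_cases hj : j = 0
      · rw [if_pos hj] at h; exact v.2.1 h
      · rw [if_neg hj] at h; exact v.2.2 h
    · exfalso
      simp only [pairFun] at h
      by_cases hi : i = 0
      · rw [if_pos hi] at h; exact w.2.1 h.symm
      · rw [if_neg hi] at h; exact w.2.2 h.symm
    · simp only [pairFun] at h
      congr 1
      fin_cases i <;> fin_cases j <;> simp_all
  · intro v
    by_cases h1 : v = a
    · exact ⟨Sum.inr 0, by simp [pairFun, h1]⟩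
    · by_cases h2 : v = b
      · refine ⟨Sum.inr 1, ?_⟩
        simp only [pairFun]
        rw [if_neg (by decide : ¬ (1 : Fin 2) = 0), h2]
      · exact ⟨Sum.inl ⟨v, h1, h2⟩, rfl⟩

noncomputable def pairEquiv (a b : V) (hne : a ≠ b) :
    ({v : V | v ≠ a ∧ v ≠ b} : Set V) ⊕ Fin 2 ≃ V :=
  Equiv.ofBijective _ (pairFun_bij hne)

lemma iso_op2 {a b : V} (hab : G.Adj a b)
    (hNb : G.neighborSet b = {a}) :
    Nonempty ((AddOp2 (G.induce {v : V | v ≠ a ∧ v ≠ b})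
      {v | G.Adj a ↑v}) ≃g G) := by
  have hne : a ≠ b := hab.ne
  refine ⟨⟨pairEquiv a b hne, ?_⟩⟩
  rintro (v | i) (w | j)
  · show G.Adj ↑v ↑w ↔ (AddOp2 _ _).Adj _ _
    rw [AddOp2, fromRel_adj]
    constructor
    · intro h
      exact ⟨by simp [Subtype.ext_iff]; exact h.ne, Or.inl h⟩
    · rintro ⟨-, h | h⟩
      · exact h
      · exact h.symm
  · show G.Adj ↑v (if j = 0 then a else b) ↔ (AddOp2 _ _).Adj _ _
    rw [AddOp2, fromRel_adj]
    fin_cases j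
    · simp only [if_pos rfl]
      constructor
      · intro h
        exact ⟨by simp, Or.inl ⟨rfl, h.symm⟩⟩
      · rintro ⟨-, ⟨-, h⟩ | h⟩
        · exact h.symm
        · exact absurd h (by simp)
    · simp only [if_neg (by decide : ¬ (1 : Fin 2) = 0)]
      constructor
      · intro h
        have hx : ↑v ∈ G.neighborSet b := h.symm
        rw [hNb] at hx
        exact absurd hx v.2.1
      · rintro ⟨-, ⟨h, -⟩ | h⟩
        · exact absurd h (by decide)
        · exact absurd h (by simp)
  · show G.Adj (if i = 0 then a else b) ↑w ↔ (AddOp2 _ _).Adj _ _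
    rw [AddOp2, fromRel_adj]
    fin_cases i
    · simp only [if_pos rfl]
      constructor
      · intro h
        exact ⟨by simp, Or.inr ⟨rfl, h⟩⟩
      · rintro ⟨-, h | ⟨-, h⟩⟩
        · exact absurd h (by simp)
        · exact h
    · simp only [if_neg (by decide : ¬ (1 : Fin 2) = 0)]
      constructor
      · intro h
        have hx : ↑w ∈ G.neighborSet b := h
        rw [hNb] at hx
        exact absurd hx w.2.1
      · rintro ⟨-, h | ⟨h, -⟩⟩
        · exact absurd h (by simp)
        · exact absurd h (by decide)
  · show G.Adj (if i = 0 then a else b) (if j = 0 then a else b) ↔ (AddOp2 _ _).Adj _ _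
    rw [AddOp2, fromRel_adj]
    fin_cases i <;> fin_cases j <;>
      simp_all [hab, hab.symm, G.loopless]

lemma iso_op1 {a b u : V} (hab : G.Adj a b)
    (hNa : G.neighborSet a = {b, u}) (hNb : G.neighborSet b = {a, u})
    (hua : u ≠ a) (hub : u ≠ b) :
    Nonempty ((AddOp1 (G.induce {v : V | v ≠ a ∧ v ≠ b})
      (⟨u, hua, hub⟩ : ({v : V | v ≠ a ∧ v ≠ b} : Set V))) ≃g G) := by
  have hne : a ≠ b := hab.ne
  have hau : G.Adj a u := by
    have hx : u ∈ G.neighborSet a := by rw [hNa]; exact Or.inr rfl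
    exact hx
  have hbu : G.Adj b u := by
    have hx : u ∈ G.neighborSet b := by rw [hNb]; exact Or.inr rfl
    exact hx
  refine ⟨⟨pairEquiv a b hne, ?_⟩⟩
  rintro (v | i) (w | j)
  · show G.Adj ↑v ↑w ↔ (AddOp1 _ _).Adj _ _
    rw [AddOp1, fromRel_adj]
    constructor
    · intro h
      exact ⟨by simp [Subtype.ext_iff]; exact h.ne, Or.inl h⟩
    · rintro ⟨-, h | h⟩
      · exact h
      · exact h.symm
  · show G.Adj ↑v (if j = 0 then a else b) ↔ (AddOp1 _ _).Adj _ _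
    rw [AddOp1, fromRel_adj]
    fin_cases j
    · simp only [if_pos rfl]
      constructor
      · intro h
        have hx : ↑v ∈ G.neighborSet a := h.symm
        rw [hNa] at hx
        rcases hx with hx | hx
        · exact absurd hx v.2.2
        · exact ⟨by simp, Or.inl (Subtype.ext hx)⟩
      · rintro ⟨-, h | h⟩
        · have : (v : V) = u := congrArg Subtype.val h
          rw [this]
          exact hau.symm
        · exact absurd h (by simp)
    · simp only [if_neg (by decide : ¬ (1 : Fin 2) = 0)]
      constructor
      · intro h
        have hx : ↑v ∈ G.neighborSet b := h.symm
        rw [hNb] at hx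
        rcases hx with hx | hx
        · exact absurd hx v.2.1
        · exact ⟨by simp, Or.inl (Subtype.ext hx)⟩
      · rintro ⟨-, h | h⟩
        · have : (v : V) = u := congrArg Subtype.val h
          rw [this]
          exact hbu.symm
        · exact absurd h (by simp)
  · show G.Adj (if i = 0 then a else b) ↑w ↔ (AddOp1 _ _).Adj _ _
    rw [AddOp1, fromRel_adj]
    fin_cases i
    · simp only [if_pos rfl]
      constructor
      · intro h
        have hx : ↑w ∈ G.neighborSet a := h
        rw [hNa] at hx
        rcases hx with hx | hx
        · exact absurd hx w.2.2
        · exact ⟨by simp, Or.inr (Subtype.ext hx)⟩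
      · rintro ⟨-, h | h⟩
        · exact absurd h (by simp)
        · have : (w : V) = u := congrArg Subtype.val h
          rw [this]
          exact hau
    · simp only [if_neg (by decide : ¬ (1 : Fin 2) = 0)]
      constructor
      · intro h
        have hx : ↑w ∈ G.neighborSet b := h
        rw [hNb] at hx
        rcases hx with hx | hx
        · exact absurd hx w.2.1
        · exact ⟨by simp, Or.inr (Subtype.ext hx)⟩
      · rintro ⟨-, h | h⟩
        · exact absurd h (by simp)
        · have : (w : V) = u := congrArg Subtype.val h
          rw [this]
          exact hbu
  · show G.Adj (if i = 0 then a else b) (if j = 0 then a else b) ↔ (AddOp1 _ _).Adj _ _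
    rw [AddOp1, fromRel_adj]
    fin_cases i <;> fin_cases j <;>
      simp_all [hab, hab.symm, G.loopless]

lemma fin2_cases (i : Fin 2) : i = 0 ∨ i = 1 := by omega

def baseSG : (⊤ : SimpleGraph (Fin 2)).Subgraph where
  verts := Set.univ
  Adj x y := x ≠ y
  adj_sub h := h
  edge_vert _ := Set.mem_univ _
  symm := ⟨fun x y h => h.symm⟩

lemma upm_base : ∃! M : (⊤ : SimpleGraph (Fin 2)).Subgraph, M.IsPerfectMatching := by
  refine ⟨baseSG, ?_, ?_⟩
  · show baseSG.IsPerfectMatching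
    rw [Subgraph.isPerfectMatching_iff]
    show ∀ v : Fin 2, ∃! w : Fin 2, v ≠ w
    intro v
    rcases fin2_cases v with rfl | rfl
    · refine ⟨1, by decide, fun y hy => ?_⟩
      rcases fin2_cases y with rfl | rfl
      · exact absurd rfl hy
      · rfl
    · refine ⟨0, by decide, fun y hy => ?_⟩
      rcases fin2_cases y with rfl | rfl
      · rfl
      · exact absurd rfl hy
  · intro N hN
    apply Subgraph.ext
    · exact Set.eq_univ_of_forall hN.2
    · funext x y
      apply propext
      show N.Adj x y ↔ x ≠ y
      constructor
      · intro h
        exact (N.adj_sub h).ne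
      · intro h
        obtain ⟨w, hw, -⟩ := (Subgraph.isPerfectMatching_iff.mp hN) x
        have h1 : x ≠ w := (N.adj_sub hw).ne
        have : w = y := by omega
        rwa [← this]

/-- Adjacency characterization in `AddOp1`. -/
lemma addOp1_adj {u : V} {x y : V ⊕ Fin 2} :
    (AddOp1 G u).Adj x y ↔ x ≠ y ∧
      ((∃ p q, x = Sum.inl p ∧ y = Sum.inl q ∧ G.Adj p q) ∨
       (∃ (p : V) (i : Fin 2), p = u ∧ ((x = Sum.inl p ∧ y = Sum.inr i) ∨ (y = Sum.inl p ∧ x = Sum.inr i))) ∨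
       (∃ i j : Fin 2, x = Sum.inr i ∧ y = Sum.inr j)) := by
  rw [AddOp1, fromRel_adj]
  constructor
  · rintro ⟨hne, h | h⟩ <;> refine ⟨hne, ?_⟩
    · match x, y, h with
      | Sum.inl p, Sum.inl q, h => exact Or.inl ⟨p, q, rfl, rfl, h⟩
      | Sum.inl p, Sum.inr i, h => exact Or.inr (Or.inl ⟨p, i, h, Or.inl ⟨rfl, rfl⟩⟩)
      | Sum.inr i, Sum.inr j, h => exact Or.inr (Or.inr ⟨i, j, rfl, rfl⟩)
    · match x, y, h with
      | Sum.inl p, Sum.inl q, h => exact Or.inl ⟨p, q, rfl, rfl, h.symm⟩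
      | Sum.inr i, Sum.inl p, h => exact Or.inr (Or.inl ⟨p, i, h, Or.inr ⟨rfl, rfl⟩⟩)
      | Sum.inr i, Sum.inr j, h => exact Or.inr (Or.inr ⟨i, j, rfl, rfl⟩)
  · rintro ⟨hne, (⟨p, q, rfl, rfl, h⟩ | ⟨p, i, rfl, (⟨rfl, rfl⟩ | ⟨rfl, rfl⟩)⟩ | ⟨i, j, rfl, rfl⟩)⟩
    · exact ⟨hne, Or.inl h⟩
    · exact ⟨hne, Or.inl rfl⟩
    · exact ⟨hne, Or.inr rfl⟩
    · exact ⟨hne, Or.inl trivial⟩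

lemma addOp2_adj {C : Set V} {x y : V ⊕ Fin 2} :
    (AddOp2 G C).Adj x y ↔ x ≠ y ∧
      ((∃ p q, x = Sum.inl p ∧ y = Sum.inl q ∧ G.Adj p q) ∨
       (∃ p, p ∈ C ∧ ((x = Sum.inl p ∧ y = Sum.inr 0) ∨ (y = Sum.inl p ∧ x = Sum.inr 0))) ∨
       (∃ i j : Fin 2, x = Sum.inr i ∧ y = Sum.inr j)) := by
  rw [AddOp2, fromRel_adj]
  constructor
  · rintro ⟨hne, h | h⟩ <;> refine ⟨hne, ?_⟩
    · match x, y, h with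
      | Sum.inl p, Sum.inl q, h => exact Or.inl ⟨p, q, rfl, rfl, h⟩
      | Sum.inl p, Sum.inr i, h => exact Or.inr (Or.inl ⟨p, h.2, Or.inl ⟨rfl, by rw [h.1]⟩⟩)
      | Sum.inr i, Sum.inr j, h => exact Or.inr (Or.inr ⟨i, j, rfl, rfl⟩)
    · match x, y, h with
      | Sum.inl p, Sum.inl q, h => exact Or.inl ⟨p, q, rfl, rfl, h.symm⟩
      | Sum.inr i, Sum.inl p, h => exact Or.inr (Or.inl ⟨p, h.2, Or.inr ⟨rfl, by rw [h.1]⟩⟩)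
      | Sum.inr i, Sum.inr j, h => exact Or.inr (Or.inr ⟨i, j, rfl, rfl⟩)
  · rintro ⟨hne, (⟨p, q, rfl, rfl, h⟩ | ⟨p, hp, (⟨rfl, rfl⟩ | ⟨rfl, rfl⟩)⟩ | ⟨i, j, rfl, rfl⟩)⟩
    · exact ⟨hne, Or.inl h⟩
    · exact ⟨hne, Or.inl ⟨rfl, hp⟩⟩
    · exact ⟨hne, Or.inr ⟨rfl, hp⟩⟩
    · exact ⟨hne, Or.inl trivial⟩

/-- extension of a subgraph to the sum type, matching the two new vertices together -/
def extendSG (H : SimpleGraph (V ⊕ Fin 2)) (M : G.Subgraph)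
    (hsub : ∀ {p q : V}, M.Adj p q → H.Adj (Sum.inl p) (Sum.inl q))
    (htop : H.Adj (Sum.inr 0) (Sum.inr 1)) : H.Subgraph where
  verts := Set.univ
  Adj := fun x y => (∃ p q, x = Sum.inl p ∧ y = Sum.inl q ∧ M.Adj p q) ∨
    (∃ i j : Fin 2, i ≠ j ∧ x = Sum.inr i ∧ y = Sum.inr j)
  adj_sub := by
    rintro x y (⟨p, q, rfl, rfl, h⟩ | ⟨i, j, hne, rfl, rfl⟩)
    · exact hsub h
    · rcases fin2_cases i with rfl | rfl <;> rcases fin2_cases j with rfl | rfl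
      · exact absurd rfl hne
      · exact htop
      · exact htop.symm
      · exact absurd rfl hne
  edge_vert := fun _ => Set.mem_univ _
  symm := Std.Symm.mk <| by
    rintro x y (⟨p, q, rfl, rfl, h⟩ | ⟨i, j, hne, rfl, rfl⟩)
    · exact Or.inl ⟨q, p, rfl, rfl, h.symm⟩
    · exact Or.inr ⟨j, i, hne.symm, rfl, rfl⟩

lemma extendSG_pm {H : SimpleGraph (V ⊕ Fin 2)} {M : G.Subgraph}
    (hM : M.IsPerfectMatching) (hsub : ∀ {p q : V}, M.Adj p q → H.Adj (Sum.inl p) (Sum.inl q))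
    (htop : H.Adj (Sum.inr 0) (Sum.inr 1)) :
    (extendSG H M hsub htop).IsPerfectMatching := by
  rw [Subgraph.isPerfectMatching_iff]
  rintro (p | i)
  · obtain ⟨w, hw, hwu⟩ := (Subgraph.isPerfectMatching_iff.mp hM) p
    refine ⟨Sum.inl w, Or.inl ⟨p, w, rfl, rfl, hw⟩, ?_⟩
    rintro y (⟨p', q', hp', rfl, h⟩ | ⟨i, j, hne, hp', rfl⟩)
    · cases hp'
      rw [hwu q' h]
    · cases hp'
  · refine ⟨Sum.inr (if i = 0 then 1 else 0), Or.inr ⟨i, _, ?_, rfl, rfl⟩, ?_⟩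
    · by_cases hi : i = 0
      · rw [if_pos hi, hi]; decide
      · rw [if_neg hi]
        rcases fin2_cases i with rfl | rfl
        · exact absurd rfl hi
        · decide
    · rintro y (⟨p', q', hp', rfl, h⟩ | ⟨ii, j, hne, hp', rfl⟩)
      · cases hp'
      · injection hp' with h9
        subst h9
        congr 1
        rcases fin2_cases i with rfl | rfl <;> rcases fin2_cases j with rfl | rfl <;>
          first | rfl | (exact absurd rfl hne) | decide
lemma upm_op2 (C : Set V) (h : ∃! M : G.Subgraph, M.IsPerfectMatching) :
    ∃! M : (AddOp2 G C).Subgraph, M.IsPerfectMatching := by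
  classical
  obtain ⟨M0, hM0, hM0u⟩ := h
  have hsub : ∀ {p q : V}, M0.Adj p q → (AddOp2 G C).Adj (Sum.inl p) (Sum.inl q) := by
    intro p q hpq
    rw [addOp2_adj]
    exact ⟨by simp [(M0.adj_sub hpq).ne], Or.inl ⟨p, q, rfl, rfl, M0.adj_sub hpq⟩⟩
  have htop : (AddOp2 G C).Adj (Sum.inr 0) (Sum.inr 1) := by
    rw [addOp2_adj]
    exact ⟨by simp, Or.inr (Or.inr ⟨0, 1, rfl, rfl⟩)⟩
  refine ⟨extendSG _ M0 hsub htop, extendSG_pm hM0 hsub htop, ?_⟩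
  intro N hN
  have h10 : N.Adj (Sum.inr 1) (Sum.inr 0) := by
    obtain ⟨w, hw, hwu⟩ := (Subgraph.isPerfectMatching_iff.mp hN) (Sum.inr 1)
    have hw' := N.adj_sub hw
    rw [addOp2_adj] at hw'
    obtain ⟨hne, ⟨p, q, hp, -, -⟩ | ⟨p, -, ⟨hp1, -⟩ | ⟨-, hp2⟩⟩ | ⟨i, j, hx, hy⟩⟩ := hw'
    · cases hp
    · cases hp1
    · cases hp2
    · injection hx with hx
      subst hx
      subst hy
      have hj : j = 0 := by
        rcases fin2_cases j with h0 | h1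
        · exact h0
        · subst h1; exact absurd rfl hne
      rwa [hj] at hw
  have hrestr : ∀ {p q : V}, N.Adj (Sum.inl p) (Sum.inl q) → G.Adj p q := by
    intro p q hpq
    have h' := N.adj_sub hpq
    rw [addOp2_adj] at h'
    obtain ⟨hne, ⟨p', q', hp, hq, hpq'⟩ | ⟨p', -, ⟨-, hy⟩ | ⟨-, hx⟩⟩ | ⟨i, j, hx, -⟩⟩ := h'
    · injection hp with hp
      injection hq with hq
      subst hp; subst hq
      exact hpq'
    · cases hy
    · cases hx
    · cases hx
  have hnol : ∀ (i : Fin 2) (p : V), N.Adj (Sum.inr i) (Sum.inl p) → False := by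
    intro i p hadj
    have hpart : N.Adj (Sum.inr i) (Sum.inr (if i = 0 then 1 else 0)) := by
      rcases fin2_cases i with rfl | rfl
      · simpa using h10.symm
      · simpa using h10
    have := partner_unique hN hadj hpart
    cases this
  set N0 : G.Subgraph :=
    { verts := Set.univ
      Adj := fun p q => N.Adj (Sum.inl p) (Sum.inl q)
      adj_sub := fun hpq => hrestr hpq
      edge_vert := fun _ => Set.mem_univ _
      symm := ⟨fun p q hpq => hpq.symm⟩ } with hN0
  have hN0pm : N0.IsPerfectMatching := by
    rw [Subgraph.isPerfectMatching_iff]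
    intro p
    obtain ⟨w, hw, hwu⟩ := (Subgraph.isPerfectMatching_iff.mp hN) (Sum.inl p)
    match w, hw with
    | Sum.inl q, hw =>
      refine ⟨q, hw, ?_⟩
      intro y hy
      have := hwu (Sum.inl y) hy
      injection this
    | Sum.inr i, hw => exact absurd hw.symm (fun hh => hnol i p hh)
  have hN0M0 := hM0u N0 hN0pm
  apply Subgraph.ext
  · exact Set.eq_univ_of_forall hN.2
  · funext x y
    apply propext
    show N.Adj x y ↔ _
    constructor
    · intro hxy
      match x, y with
      | Sum.inl p, Sum.inl q =>
        have : N0.Adj p q := hxy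
        rw [hN0M0] at this
        exact Or.inl ⟨p, q, rfl, rfl, this⟩
      | Sum.inl p, Sum.inr i => exact absurd hxy.symm (fun hh => hnol i p hh)
      | Sum.inr i, Sum.inl p => exact absurd hxy (fun hh => hnol i p hh)
      | Sum.inr i, Sum.inr j =>
        have hne : i ≠ j := by
          intro hij
          subst hij
          exact ((AddOp2 G C).loopless.irrefl _) (N.adj_sub hxy)
        exact Or.inr ⟨i, j, hne, rfl, rfl⟩
    · rintro (⟨p, q, rfl, rfl, hpq⟩ | ⟨i, j, hne, rfl, rfl⟩)
      · rw [← hN0M0] at hpq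
        exact hpq
      · rcases fin2_cases i with rfl | rfl <;> rcases fin2_cases j with rfl | rfl
        · exact absurd rfl hne
        · exact h10.symm
        · exact h10
        · exact absurd rfl hne

lemma upm_op1 (u : V) (h : ∃! M : G.Subgraph, M.IsPerfectMatching) :
    ∃! M : (AddOp1 G u).Subgraph, M.IsPerfectMatching := by
  classical
  obtain ⟨M0, hM0, hM0u⟩ := h
  have hsub : ∀ {p q : V}, M0.Adj p q → (AddOp1 G u).Adj (Sum.inl p) (Sum.inl q) := by
    intro p q hpq
    rw [addOp1_adj]
    exact ⟨by simp [(M0.adj_sub hpq).ne], Or.inl ⟨p, q, rfl, rfl, M0.adj_sub hpq⟩⟩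
  have htop : (AddOp1 G u).Adj (Sum.inr 0) (Sum.inr 1) := by
    rw [addOp1_adj]
    exact ⟨by simp, Or.inr (Or.inr ⟨0, 1, rfl, rfl⟩)⟩
  refine ⟨extendSG _ M0 hsub htop, extendSG_pm hM0 hsub htop, ?_⟩
  intro N hN
  have hcand : ∀ (i : Fin 2) (w : V ⊕ Fin 2), N.Adj (Sum.inr i) w →
      w = Sum.inr (if i = 0 then 1 else 0) ∨ w = Sum.inl u := by
    intro i w hw
    have hw' := N.adj_sub hw
    rw [addOp1_adj] at hw'
    obtain ⟨hne, ⟨p, q, hp, -, -⟩ | ⟨p, i', rfl, ⟨hp1, -⟩ | ⟨hy, -⟩⟩ | ⟨i', j, hx, hy⟩⟩ := hw'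
    · cases hp
    · cases hp1
    · exact Or.inr hy
    · injection hx with hx
      subst hx
      subst hy
      left
      congr 1
      rcases fin2_cases i with rfl | rfl <;> rcases fin2_cases j with rfl | rfl <;>
        first | rfl | (exact absurd rfl hne) | (exact absurd rfl (by simpa using hne))
  have h10 : N.Adj (Sum.inr 1) (Sum.inr 0) := by
    obtain ⟨w1, hw1, -⟩ := (Subgraph.isPerfectMatching_iff.mp hN) (Sum.inr 1)
    rcases hcand 1 w1 hw1 with h1 | h1
    · rw [h1] at hw1
      simpa using hw1
    · obtain ⟨w0, hw0, -⟩ := (Subgraph.isPerfectMatching_iff.mp hN) (Sum.inr 0)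
      rcases hcand 0 w0 hw0 with h0 | h0
      · rw [h0] at hw0
        simp only [if_pos rfl] at hw0
        exact hw0.symm
      · exfalso
        rw [h1] at hw1
        rw [h0] at hw0
        have := partner_unique hN hw1.symm hw0.symm
        cases this
  have hrestr : ∀ {p q : V}, N.Adj (Sum.inl p) (Sum.inl q) → G.Adj p q := by
    intro p q hpq
    have h' := N.adj_sub hpq
    rw [addOp1_adj] at h'
    obtain ⟨hne, ⟨p', q', hp, hq, hpq'⟩ | ⟨p', i', -, ⟨-, hy⟩ | ⟨-, hx⟩⟩ | ⟨i, j, hx, -⟩⟩ := h'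
    · injection hp with hp
      injection hq with hq
      subst hp; subst hq
      exact hpq'
    · cases hy
    · cases hx
    · cases hx
  have hnol : ∀ (i : Fin 2) (p : V), N.Adj (Sum.inr i) (Sum.inl p) → False := by
    intro i p hadj
    have hpart : N.Adj (Sum.inr i) (Sum.inr (if i = 0 then 1 else 0)) := by
      rcases fin2_cases i with rfl | rfl
      · simpa using h10.symm
      · simpa using h10
    have := partner_unique hN hadj hpart
    cases this
  set N0 : G.Subgraph :=
    { verts := Set.univ
      Adj := fun p q => N.Adj (Sum.inl p) (Sum.inl q)
      adj_sub := fun hpq => hrestr hpq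
      edge_vert := fun _ => Set.mem_univ _
      symm := ⟨fun p q hpq => hpq.symm⟩ } with hN0
  have hN0pm : N0.IsPerfectMatching := by
    rw [Subgraph.isPerfectMatching_iff]
    intro p
    obtain ⟨w, hw, hwu⟩ := (Subgraph.isPerfectMatching_iff.mp hN) (Sum.inl p)
    match w, hw with
    | Sum.inl q, hw =>
      refine ⟨q, hw, ?_⟩
      intro y hy
      have := hwu (Sum.inl y) hy
      injection this
    | Sum.inr i, hw => exact absurd hw.symm (fun hh => hnol i p hh)
  have hN0M0 := hM0u N0 hN0pm
  apply Subgraph.ext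
  · exact Set.eq_univ_of_forall hN.2
  · funext x y
    apply propext
    show N.Adj x y ↔ _
    constructor
    · intro hxy
      match x, y with
      | Sum.inl p, Sum.inl q =>
        have : N0.Adj p q := hxy
        rw [hN0M0] at this
        exact Or.inl ⟨p, q, rfl, rfl, this⟩
      | Sum.inl p, Sum.inr i => exact absurd hxy.symm (fun hh => hnol i p hh)
      | Sum.inr i, Sum.inl p => exact absurd hxy (fun hh => hnol i p hh)
      | Sum.inr i, Sum.inr j =>
        have hne : i ≠ j := by
          intro hij
          subst hij
          exact ((AddOp1 G u).loopless.irrefl _) (N.adj_sub hxy)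
        exact Or.inr ⟨i, j, hne, rfl, rfl⟩
    · rintro (⟨p, q, rfl, rfl, hpq⟩ | ⟨i, j, hne, rfl, rfl⟩)
      · rw [← hN0M0] at hpq
        exact hpq
      · rcases fin2_cases i with rfl | rfl <;> rcases fin2_cases j with rfl | rfl
        · exact absurd rfl hne
        · exact h10.symm
        · exact h10
        · exact absurd rfl hne

lemma upm_iso {W : Type} {H : SimpleGraph W} (e : G ≃g H)
    (h : ∃! M : G.Subgraph, M.IsPerfectMatching) :
    ∃! N : H.Subgraph, N.IsPerfectMatching := by
  obtain ⟨M, hM, hMu⟩ := h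
  set F : H.Subgraph :=
    { verts := Set.univ
      Adj := fun x y => M.Adj (e.symm x) (e.symm y)
      adj_sub := by
        intro x y hxy
        have h1 : G.Adj (e.symm x) (e.symm y) := M.adj_sub hxy
        have h2 := e.map_adj_iff.mpr h1
        rwa [RelIso.apply_symm_apply, RelIso.apply_symm_apply] at h2
      edge_vert := fun _ => Set.mem_univ _
      symm := ⟨fun x y hxy => hxy.symm⟩ } with hF
  have hFpm : F.IsPerfectMatching := by
    rw [Subgraph.isPerfectMatching_iff]
    intro x
    obtain ⟨w, hw, hwu⟩ := (Subgraph.isPerfectMatching_iff.mp hM) (e.symm x)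
    refine ⟨e w, ?_, ?_⟩
    · show M.Adj (e.symm x) (e.symm (e w))
      rwa [RelIso.symm_apply_apply]
    · intro y hy
      have h1 : M.Adj (e.symm x) (e.symm y) := hy
      have h2 := hwu _ h1
      have h3 := congrArg e h2
      rwa [RelIso.apply_symm_apply] at h3
  refine ⟨F, hFpm, ?_⟩
  intro N hN
  set N' : G.Subgraph :=
    { verts := Set.univ
      Adj := fun p q => N.Adj (e p) (e q)
      adj_sub := by
        intro p q hpq
        exact e.map_adj_iff.mp (N.adj_sub hpq)
      edge_vert := fun _ => Set.mem_univ _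
      symm := ⟨fun p q hpq => hpq.symm⟩ } with hN'
  have hN'pm : N'.IsPerfectMatching := by
    rw [Subgraph.isPerfectMatching_iff]
    intro p
    obtain ⟨w, hw, hwu⟩ := (Subgraph.isPerfectMatching_iff.mp hN) (e p)
    refine ⟨e.symm w, ?_, ?_⟩
    · show N.Adj (e p) (e (e.symm w))
      rwa [RelIso.apply_symm_apply]
    · intro y hy
      have h2 := hwu _ hy
      have h3 := congrArg e.symm h2
      rwa [RelIso.symm_apply_apply] at h3
  have hNM := hMu N' hN'pm
  apply Subgraph.ext
  · exact Set.eq_univ_of_forall hN.2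
  · funext x y
    apply propext
    show N.Adj x y ↔ M.Adj (e.symm x) (e.symm y)
    rw [← hNM]
    show N.Adj x y ↔ N.Adj (e (e.symm x)) (e (e.symm y))
    rw [RelIso.apply_symm_apply, RelIso.apply_symm_apply]

lemma backward (V : Type) (G : SimpleGraph V) (h : InClassG V G) :
    ∃! M : G.Subgraph, M.IsPerfectMatching := by
  induction h with
  | base => exact upm_base
  | op1 G u hu hprev ih => exact upm_op1 u ih
  | op2 G C hne hC hnbr hprev ih => exact upm_op2 C ih
  | iso G H e hprev ih => exact upm_iso e ih

lemma forward : ∀ (n : ℕ) (V : Type) [Fintype V] (G : SimpleGraph V),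
    Fintype.card V = n → G.Connected → ClawFree G →
    (∃! M : G.Subgraph, M.IsPerfectMatching) → InClassG V G := by
  intro n
  induction n using Nat.strong_induction_on with
  | _ n IH =>
  intro V _ G hcard hconn hcf hupm
  classical
  obtain ⟨M, hM, hU⟩ := hupm
  haveI : Nonempty V := hconn.nonempty
  obtain ⟨a, b, hab, hform⟩ := structure_lemma hcf hM hU
  have hGab : G.Adj a b := M.adj_sub hab
  have hnab : a ≠ b := hGab.ne
  set s : Set V := {v : V | v ≠ a ∧ v ≠ b} with hs
  have hcard2 : Fintype.card {v : V // v = a ∨ v = b} = 2 := by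
    have hs2 : (Finset.univ.filter (fun v : V => v = a ∨ v = b)) = {a, b} := by
      ext v
      simp
    rw [Fintype.card_subtype, hs2, Finset.card_insert_of_notMem (by simpa using hnab),
      Finset.card_singleton]
  have hcard_s : Fintype.card ↥s = n - 2 := by
    have e1 : ↥s ≃ {v : V // ¬(v = a ∨ v = b)} :=
      Equiv.subtypeEquivRight (fun v => by
        show v ≠ a ∧ v ≠ b ↔ _
        tauto)
    rw [Fintype.card_congr e1, Fintype.card_subtype_compl, hcard2, hcard]
  have hn2 : 2 ≤ n := by
    rw [← hcard]
    have h2 : ({a, b} : Finset V).card ≤ (Finset.univ : Finset V).card :=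
      Finset.card_le_card (Finset.subset_univ _)
    rw [Finset.card_insert_of_notMem (by simpa using hnab), Finset.card_singleton] at h2
    simpa using h2
  by_cases hn : n = 2
  · -- G is isomorphic to K₂
    have hall : ∀ v : V, v = a ∨ v = b := by
      intro v
      by_contra hv
      push_neg at hv
      have h3 : ({a, b, v} : Finset V).card ≤ (Finset.univ : Finset V).card :=
        Finset.card_le_card (Finset.subset_univ _)
    -- card {a,b,v} = 3
      rw [Finset.card_insert_of_notMem (by simp [hnab, Ne.symm hv.1]),
        Finset.card_insert_of_notMem (by simp [Ne.symm hv.2]),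
        Finset.card_singleton] at h3
      rw [Finset.card_univ, hcard, hn] at h3
      omega
    have hbij : Function.Bijective (fun i : Fin 2 => if i = 0 then a else b) := by
      constructor
      · intro i j hij
        fin_cases i <;> fin_cases j <;> simp_all
      · intro v
        rcases hall v with rfl | rfl
        · exact ⟨0, by simp⟩
        · refine ⟨1, ?_⟩
          simp only
          rw [if_neg (by decide : ¬ (1 : Fin 2) = 0)]
    refine InClassG.iso _ _ ⟨Equiv.ofBijective _ hbij, ?_⟩ InClassG.base
    intro i j
    show G.Adj _ _ ↔ (⊤ : SimpleGraph (Fin 2)).Adj i j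
    rw [top_adj]
    show G.Adj (if i = 0 then a else b) (if j = 0 then a else b) ↔ i ≠ j
    constructor
    · intro h
      intro hij
      subst hij
      exact (G.loopless.irrefl _) h
    · intro hij
      fin_cases i <;> fin_cases j <;> simp_all [hGab, hGab.symm]
  · have hn3 : 3 ≤ n := by omega
    have hNes : Nonempty ↥s := by
      rw [← Fintype.card_pos_iff, hcard_s]
      omega
    have hout : ∀ x : V, x ∉ s → (x = a ∨ x = b) := by
      intro x hx
      by_contra hc
      push_neg at hc
      exact hx ⟨hc.1, hc.2⟩
    have hcf' := clawfree_induce hcf s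
    obtain ⟨M', hM', hM'u⟩ := induced_upm hM hU hab
    rcases hform with hNb | ⟨u, hNa, hNb⟩
    · -- Operation 2 case: b is a pendant vertex attached to a
      have hnotb : ∀ p : V, p ∈ s → ¬ G.Adj b p := by
        intro p hp hadj
        have hmem : p ∈ G.neighborSet b := hadj
        rw [hNb] at hmem
        exact hp.1 hmem
      have hborder : ∀ p : V, p ∈ s → (∃ x, x ∉ s ∧ G.Adj p x) → G.Adj p a := by
        rintro p hp ⟨x, hx, hpx⟩
        rcases hout x hx with h | h
        · rwa [h] at hpx
        · rw [h] at hpx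
          exact absurd hpx.symm (hnotb p hp)
      have hclq : ∀ p q : V, p ∈ s → q ∈ s → p ≠ q → G.Adj a p → G.Adj a q → G.Adj p q := by
        intro p q hp hq hpq hap haq
        by_contra hnadj
        exact hcf ⟨a, b, p, q, hnab, fun h => hp.1 h.symm, fun h => hq.1 h.symm,
          fun h => hp.2 h.symm, fun h => hq.2 h.symm, hpq, hGab, hap, haq,
          hnotb p hp, hnotb q hq, hnadj⟩
      have hbc : ∀ p q : V, p ∈ s → q ∈ s → p ≠ q →
          (∃ x, x ∉ s ∧ G.Adj p x) → (∃ x, x ∉ s ∧ G.Adj q x) → G.Adj p q := by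
        intro p q hp hq hpq h1 h2
        exact hclq p q hp hq hpq (hborder p hp h1).symm (hborder q hq h2).symm
      have hconn' : (G.induce s).Connected := by
        rw [connected_iff]
        refine ⟨?_, hNes⟩
        rintro ⟨x, hx⟩ ⟨y, hy⟩
        obtain ⟨w⟩ := hconn.preconnected x y
        exact (walk_avoid (fun p q hp hq hpq h1 h2 => hbc p q hp hq hpq
          (by simpa using h1) (by simpa using h2)) w.length).1 w le_rfl hx hy
      have hclass : InClassG ↥s (G.induce s) :=
        IH (n-2) (by omega) ↥s (G.induce s) hcard_s hconn' hcf' ⟨M', hM', hM'u⟩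
      set C : Set ↥s := {v : ↥s | G.Adj a ↑v} with hC
      have hCne : C.Nonempty := by
        obtain ⟨z⟩ := hNes
        obtain ⟨w⟩ := hconn.preconnected ↑z a
        obtain ⟨p, q, hp, hq, hpq⟩ := walk_cross (S := {x : V | x ∉ s}) w
          (by simp only [Set.mem_setOf_eq, not_not]; exact z.2)
          (by simp only [Set.mem_setOf_eq]; intro hin; exact hin.1 rfl)
        have hps : p ∈ s := not_not.mp hp
        exact ⟨⟨p, hps⟩, (hborder p hps ⟨q, hq, hpq⟩).symm⟩
      have hCclq : (G.induce s).IsClique C := by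
        intro v hv w hw hvw
        exact hclq ↑v ↑w v.2 w.2 (fun h => hvw (Subtype.ext h)) hv hw
      have hCnbr : ∀ v ∈ C, (G.induce s).IsClique ((G.induce s).neighborSet v \ C) := by
        intro v hv x hx y hy hxy
        obtain ⟨hx1, hx2⟩ := hx
        obtain ⟨hy1, hy2⟩ := hy
        have hvx : G.Adj ↑v ↑x := hx1
        have hvy : G.Adj ↑v ↑y := hy1
        have hax : ¬ G.Adj a ↑x := hx2
        have hay : ¬ G.Adj a ↑y := hy2
        by_contra hnadj
        exact hcf ⟨↑v, a, ↑x, ↑y, v.2.1, hvx.ne, hvy.ne, fun h => x.2.1 h.symm,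
          fun h => y.2.1 h.symm, fun h => hxy (Subtype.ext h), hv.symm, hvx, hvy,
          hax, hay, hnadj⟩
      obtain ⟨iso2⟩ := iso_op2 hGab hNb
      exact InClassG.iso _ _ iso2 (InClassG.op2 _ C hCne hCclq hCnbr hclass)
    · -- Operation 1 case: pendant triangle a, b, u
      have hau : G.Adj a u := by
        have hmem : u ∈ G.neighborSet a := by rw [hNa]; exact Or.inr rfl
        exact hmem
      have hbu : G.Adj b u := by
        have hmem : u ∈ G.neighborSet b := by rw [hNb]; exact Or.inr rfl
        exact hmem
      have hua : u ≠ a := fun h => (G.loopless.irrefl a) (h ▸ hau)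
      have hub : u ≠ b := fun h => (G.loopless.irrefl b) (h ▸ hbu)
      have hborder : ∀ p : V, p ∈ s → (∃ x, x ∉ s ∧ G.Adj p x) → p = u := by
        rintro p hp ⟨x, hx, hpx⟩
        rcases hout x hx with h9 | h9
        · rw [h9] at hpx
          have hmem : p ∈ G.neighborSet a := hpx.symm
          rw [hNa] at hmem
          rcases hmem with h | h
          · exact absurd h hp.2
          · exact h
        · rw [h9] at hpx
          have hmem : p ∈ G.neighborSet b := hpx.symm
          rw [hNb] at hmem
          rcases hmem with h | h
          · exact absurd h hp.1
          · exact h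
      have hbc : ∀ p q : V, p ∈ s → q ∈ s → p ≠ q →
          (∃ x, x ∉ s ∧ G.Adj p x) → (∃ x, x ∉ s ∧ G.Adj q x) → G.Adj p q := by
        intro p q hp hq hpq h1 h2
        exact absurd ((hborder p hp h1).trans (hborder q hq h2).symm) hpq
      have hconn' : (G.induce s).Connected := by
        rw [connected_iff]
        refine ⟨?_, hNes⟩
        rintro ⟨x, hx⟩ ⟨y, hy⟩
        obtain ⟨w⟩ := hconn.preconnected x y
        exact (walk_avoid (fun p q hp hq hpq h1 h2 => hbc p q hp hq hpq
          (by simpa using h1) (by simpa using h2)) w.length).1 w le_rfl hx hy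
      have hclass : InClassG ↥s (G.induce s) :=
        IH (n-2) (by omega) ↥s (G.induce s) hcard_s hconn' hcf' ⟨M', hM', hM'u⟩
      have huclq : (G.induce s).IsClique
          ((G.induce s).neighborSet (⟨u, hua, hub⟩ : ↥s)) := by
        intro x hx y hy hxy
        have hux : G.Adj u ↑x := hx
        have huy : G.Adj u ↑y := hy
        have hnax : ¬ G.Adj a ↑x := by
          intro h
          have hmem : (↑x : V) ∈ G.neighborSet a := h
          rw [hNa] at hmem
          rcases hmem with h' | h'
          · exact x.2.2 h'
          · exact hux.ne h'.symm
        have hnay : ¬ G.Adj a ↑y := by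
          intro h
          have hmem : (↑y : V) ∈ G.neighborSet a := h
          rw [hNa] at hmem
          rcases hmem with h' | h'
          · exact y.2.2 h'
          · exact huy.ne h'.symm
        by_contra hnadj
        exact hcf ⟨u, a, ↑x, ↑y, hua, hux.ne, huy.ne, fun h => x.2.1 h.symm,
          fun h => y.2.1 h.symm, fun h => hxy (Subtype.ext h), hau.symm, hux, huy,
          hnax, hnay, hnadj⟩
      obtain ⟨iso1⟩ := iso_op1 hGab hNa hNb hua hub
      exact InClassG.iso _ _ iso1 (InClassG.op1 _ ⟨u, hua, hub⟩ huclq hclass)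

end UPM

theorem connected_clawfree_unique_pm_iff_classG (V : Type) [Fintype V]
    (G : SimpleGraph V) (hconn : G.Connected) (hcf : ClawFree G) :
    (∃! M : G.Subgraph, M.IsPerfectMatching) ↔ InClassG V G := by
  constructor
  · intro h
    exact UPM.forward (Fintype.card V) V G rfl hconn hcf h
  · intro h
    exact UPM.backward V G h
end

section
/- Let G be a connected claw-free finite simple graph with a unique perfect matching, let u be a simplicial vertex of G, and let G' be the graph obtained from G by adding two new vertices x and y together with the three new edges xy, xu, and yu. Then G' is connected, claw-free, and has a unique perfect matching. -/
open Sum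

lemma addOp1_adj_ll {V : Type*} (G : SimpleGraph V) (u a b : V) :
    (AddOp1 G u).Adj (inl a) (inl b) ↔ G.Adj a b := by
  simp only [AddOp1, SimpleGraph.fromRel_adj, ne_eq, inl.injEq]
  constructor
  · rintro ⟨h, h1 | h1⟩
    · exact h1
    · exact h1.symm
  · intro h; exact ⟨h.ne, Or.inl h⟩

lemma addOp1_adj_lr {V : Type*} (G : SimpleGraph V) (u a : V) (i : Fin 2) :
    (AddOp1 G u).Adj (inl a) (inr i) ↔ a = u := by
  simp [AddOp1, SimpleGraph.fromRel_adj]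

lemma addOp1_adj_rl {V : Type*} (G : SimpleGraph V) (u a : V) (i : Fin 2) :
    (AddOp1 G u).Adj (inr i) (inl a) ↔ a = u := by
  simp [AddOp1, SimpleGraph.fromRel_adj]

lemma addOp1_adj_rr {V : Type*} (G : SimpleGraph V) (u : V) (i j : Fin 2) :
    (AddOp1 G u).Adj (inr i) (inr j) ↔ i ≠ j := by
  simp [AddOp1, SimpleGraph.fromRel_adj]

/-- The lifted matching on `AddOp1 G u`. -/
def liftPM {V : Type*} (G : SimpleGraph V) (u : V) (M : G.Subgraph) :
    (AddOp1 G u).Subgraph where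
  verts := Set.univ
  Adj a b := match a, b with
    | inl a, inl b => M.Adj a b
    | inr i, inr j => i ≠ j
    | _, _ => False
  adj_sub := by
    rintro (a | i) (b | j) h
    · exact (addOp1_adj_ll G u a b).2 (M.adj_sub h)
    · exact h.elim
    · exact h.elim
    · exact (addOp1_adj_rr G u i j).2 h
  edge_vert := fun _ => Set.mem_univ _
  symm := by
    constructor
    rintro (a | i) (b | j) h
    · exact M.adj_symm h
    · exact h.elim
    · exact h.elim
    · exact Ne.symm h

lemma fin2_other {i j : Fin 2} (h : j ≠ i) : j = 1 - i := by
  fin_cases i <;> fin_cases j <;> simp_all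

theorem op1_preserves_connected_clawfree_unique_pm {V : Type*} [Fintype V]
    (G : SimpleGraph V) (hconn : G.Connected) (hcf : ClawFree G)
    (hupm : ∃! M : G.Subgraph, M.IsPerfectMatching)
    (u : V) (hu : G.IsClique (G.neighborSet u)) :
    (AddOp1 G u).Connected ∧ ClawFree (AddOp1 G u) ∧
      ∃! M : (AddOp1 G u).Subgraph, M.IsPerfectMatching := by
  -- a graph hom from G
  let f : G →g AddOp1 G u := ⟨inl, fun h => (addOp1_adj_ll G u _ _).2 h⟩
  refine ⟨?_, ?_, ?_⟩
  · -- Connected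
    constructor
    · intro a b
      have key : ∀ v : V ⊕ Fin 2, (AddOp1 G u).Reachable v (inl u) := by
        rintro (v | i)
        · exact (hconn.preconnected v u).map f
        · exact ((addOp1_adj_rl G u u i).2 rfl).reachable
      exact (key a).trans (key b).symm
  · -- ClawFree
    rintro ⟨a, b, c, d, hab, hac, had, hbc, hbd, hcd, Aab, Aac, Aad, Nbc, Nbd, Ncd⟩
    obtain (a | i) := a
    · obtain (b | i) := b
      · obtain (c | j) := c
        · obtain (d | k) := d
          · -- all in V : claw in G
            exact hcf ⟨a, b, c, d, by simpa using hab, by simpa using hac,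
              by simpa using had, by simpa using hbc, by simpa using hbd,
              by simpa using hcd, (addOp1_adj_ll G u a b).1 Aab,
              (addOp1_adj_ll G u a c).1 Aac, (addOp1_adj_ll G u a d).1 Aad,
              fun h => Nbc ((addOp1_adj_ll G u b c).2 h),
              fun h => Nbd ((addOp1_adj_ll G u b d).2 h),
              fun h => Ncd ((addOp1_adj_ll G u c d).2 h)⟩
          · -- d = inr k, so a = u; b, c are neighbors of u hence adjacent
            have ha : a = u := (addOp1_adj_lr G u a k).1 Aad
            have h1 : G.Adj u b := ha ▸ (addOp1_adj_ll G u a b).1 Aab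
            have h2 : G.Adj u c := ha ▸ (addOp1_adj_ll G u a c).1 Aac
            exact Nbc ((addOp1_adj_ll G u b c).2 (hu h1 h2 (by simpa using hbc)))
        · obtain (d | k) := d
          · have ha : a = u := (addOp1_adj_lr G u a j).1 Aac
            have h1 : G.Adj u b := ha ▸ (addOp1_adj_ll G u a b).1 Aab
            have h2 : G.Adj u d := ha ▸ (addOp1_adj_ll G u a d).1 Aad
            exact Nbd ((addOp1_adj_ll G u b d).2 (hu h1 h2 (by simpa using hbd)))
          · exact Ncd ((addOp1_adj_rr G u j k).2 (by simpa using hcd))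
      · obtain (c | j) := c
        · obtain (d | k) := d
          · have ha : a = u := (addOp1_adj_lr G u a i).1 Aab
            have h1 : G.Adj u c := ha ▸ (addOp1_adj_ll G u a c).1 Aac
            have h2 : G.Adj u d := ha ▸ (addOp1_adj_ll G u a d).1 Aad
            exact Ncd ((addOp1_adj_ll G u c d).2 (hu h1 h2 (by simpa using hcd)))
          · exact Nbd ((addOp1_adj_rr G u i k).2 (by simpa using hbd))
        · exact Nbc ((addOp1_adj_rr G u i j).2 (by simpa using hbc))
    · -- center is inr i: its only neighbors are inl u and inr (other)
      have hnb : ∀ w, (AddOp1 G u).Adj (inr i) w → w = inl u ∨ w = inr (1 - i) := by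
        rintro (w | j) h
        · exact Or.inl (by rw [(addOp1_adj_rl G u w i).1 h])
        · exact Or.inr (by rw [fin2_other (Ne.symm ((addOp1_adj_rr G u i j).1 h))])
      rcases hnb b Aab with hb | hb <;> rcases hnb c Aac with hc | hc <;>
        rcases hnb d Aad with hd | hd <;> subst hb <;> subst hc <;> subst hd <;>
        simp_all
  · -- Unique perfect matching
    obtain ⟨M₀, hM₀, huniq₀⟩ := hupm
    refine ⟨liftPM G u M₀, ⟨?_, fun v => Set.mem_univ v⟩, ?_⟩
    · -- liftPM is a matching
      rintro (v | i) _
      · obtain ⟨w, hw, hwu⟩ := hM₀.1 (hM₀.2 v)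
        refine ⟨inl w, hw, ?_⟩
        rintro (w' | j) h
        · exact congrArg inl (hwu w' h)
        · exact h.elim
      · refine ⟨inr (1 - i), by fin_cases i <;> simp [liftPM], ?_⟩
        rintro (w | j) h
        · exact h.elim
        · exact congrArg inr (fin2_other (Ne.symm h))
    · -- uniqueness
      intro N hN
      have hres : ∀ (i : Fin 2) w, N.Adj (inr i) w → w = inl u ∨ w = inr (1 - i) := by
        rintro i (a | j) h
        · exact Or.inl (by rw [(addOp1_adj_rl G u a i).1 (N.adj_sub h)])
        · exact Or.inr (by rw [fin2_other (Ne.symm ((addOp1_adj_rr G u i j).1 (N.adj_sub h)))])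
      -- N must contain the edge (inr 0, inr 1)
      have hNxy : N.Adj (inr 0) (inr 1) := by
        obtain ⟨w, hw, hwu⟩ := hN.1 (hN.2 (inr 0))
        obtain ⟨w', hw', hwu'⟩ := hN.1 (hN.2 (inr 1))
        rcases hres 0 w hw with h0 | h0
        · subst h0
          rcases hres 1 w' hw' with h1 | h1
          · subst h1
            -- inl u adjacent to both inr 0 and inr 1 in N : contradiction
            obtain ⟨z, hz, hzu⟩ := hN.1 (hN.2 (inl u))
            have e0 : z = inr 0 := (hzu _ (N.adj_symm hw)).symm
            have e1 : z = inr 1 := (hzu _ (N.adj_symm hw')).symm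
            simp [e0] at e1
          · subst h1
            have h10 : (1 - 1 : Fin 2) = 0 := by decide
            rw [h10] at hw'
            have := hwu _ (N.adj_symm hw')
            simp at this
        · exact h0 ▸ hw
      -- no edge from inl a to inr i in N
      have hno : ∀ (a : V) (i : Fin 2), ¬ N.Adj (inl a) (inr i) := by
        intro a i h
        obtain ⟨z, hz, hzu⟩ := hN.1 (hN.2 (inr i))
        have e1 : z = inl a := (hzu _ (N.adj_symm h)).symm
        have hadj : N.Adj (inr i) (inr (1 - i)) := by
          fin_cases i
          · simpa using hNxy
          · simpa using N.adj_symm hNxy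
        have e2 : z = inr (1 - i) := (hzu _ hadj).symm
        rw [e1] at e2; exact inl_ne_inr e2
      -- restriction of N to V
      let N₀ : G.Subgraph :=
        { verts := Set.univ
          Adj := fun a b => N.Adj (inl a) (inl b)
          adj_sub := fun h => (addOp1_adj_ll G u _ _).1 (N.adj_sub h)
          edge_vert := fun _ => Set.mem_univ _
          symm := ⟨fun a b h => N.adj_symm h⟩ }
      have hN₀ : N₀.IsPerfectMatching := by
        refine ⟨?_, fun v => Set.mem_univ v⟩
        rintro v _
        obtain ⟨w, hw, hwu⟩ := hN.1 (hN.2 (inl v))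
        obtain (w | j) := w
        · refine ⟨w, hw, fun y hy => ?_⟩
          have := hwu _ hy
          simpa using this
        · exact absurd hw (hno v j)
      have hEq : N₀ = M₀ := huniq₀ N₀ hN₀
      -- conclude N = liftPM
      apply SimpleGraph.Subgraph.ext
      · have : N.verts = Set.univ := Set.eq_univ_of_forall hN.2
        simp [liftPM, this]
      · funext x y
        apply propext
        constructor
        · intro h
          obtain (a | i) := x <;> obtain (b | j) := y
          · show M₀.Adj a b
            rw [← hEq]; exact h
          · exact absurd h (hno a j)
          · exact absurd (N.adj_symm h) (hno b i)
          · exact (addOp1_adj_rr G u i j).1 (N.adj_sub h)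
        · intro h
          obtain (a | i) := x <;> obtain (b | j) := y
          · have hM : M₀.Adj a b := h
            rw [← hEq] at hM; exact hM
          · exact h.elim
          · exact h.elim
          · have hij : i ≠ j := h
            have hj : j = 1 - i := fin2_other (Ne.symm hij)
            subst hj
            fin_cases i
            · simpa using hNxy
            · simpa using N.adj_symm hNxy
end
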